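/- Let Ω ⊆ Σ^{ℤ^d} be a shift space with the TMP and the pivot property, and let B_Sull(Ω) be the space of shift-invariant continuous cocycles on the asymptotic relation of Ω with the norm ‖ψ‖_Sull = sup_{x∈Ω} |ψ(x, ζ₀x)|. Then the map F : B_Sull(Ω) → C(Ω) given by F(ψ)(x) = ψ(x, ζ₀x) is an injective linear map whose image is closed in C(Ω) with respect to the uniform norm; consequently ‖·‖_Sull is a complete norm. -/

import Mathlib

open scoped Classical

/-- Configurations on `ℤ^d` over the alphabet `α`. -/
abbrev Config (d : ℕ) (α : Type*) := (Fin d → ℤ) → α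

/-- The shift of a configuration by `k ∈ ℤ^d`. -/
def shiftBy {d : ℕ} {α : Type*} (k : Fin d → ℤ) (x : Config d α) : Config d α :=
  fun i => x (i + k)

/-- Two configurations are asymptotic if they differ at finitely many sites. -/
def Asymptotic {d : ℕ} {α : Type*} (x y : Config d α) : Prop := {i | x i ≠ y i}.Finite

/-- Topological Markov property. -/
def TMP {d : ℕ} {α : Type*} (Ω : Set (Config d α)) : Prop :=
  ∀ A : Finset (Fin d → ℤ), ∃ B : Finset (Fin d → ℤ), A ⊆ B ∧
    ∀ x ∈ Ω, ∀ y ∈ Ω, (∀ i ∈ B, i ∉ A → x i = y i) →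
      (fun i => if i ∈ B then x i else y i) ∈ Ω

/-- Pivot property. -/
def PivotProperty {d : ℕ} {α : Type*} (Ω : Set (Config d α)) : Prop :=
  ∀ x ∈ Ω, ∀ y ∈ Ω, Asymptotic x y →
    ∃ (n : ℕ) (z : ℕ → Config d α), z 0 = x ∧ z n = y ∧ (∀ i ≤ n, z i ∈ Ω) ∧
      ∀ i < n, ∃ s : Fin d → ℤ, z i s ≠ z (i + 1) s ∧ ∀ t, t ≠ s → z i t = z (i + 1) t

/-- `ζ₀ x`: replace the symbol of `x` at the origin by the smallest symbol (w.r.t. the fixed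
total order on the alphabet) keeping the configuration in `Ω`. -/
noncomputable def zeta {d : ℕ} {α : Type*} [Fintype α] [LinearOrder α]
    (Ω : Set (Config d α)) (x : Config d α) : Config d α :=
  Function.update x 0 <|
    if h : (Finset.univ.filter
        fun a : α => Function.update x (0 : Fin d → ℤ) a ∈ Ω).Nonempty
    then (Finset.univ.filter
        fun a : α => Function.update x (0 : Fin d → ℤ) a ∈ Ω).min' h
    else x 0

/-- A shift-invariant continuous cocycle on the asymptotic relation of `Ω`. -/
def IsSullCocycle {d : ℕ} {α : Type*} [TopologicalSpace α]
    (Ω : Set (Config d α)) (ψ : Config d α → Config d α → ℝ) : Prop :=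
  (∀ x ∈ Ω, ∀ y ∈ Ω, ∀ z ∈ Ω, Asymptotic x y → Asymptotic y z →
      ψ x y + ψ y z = ψ x z)
  ∧ (∀ k : Fin d → ℤ, ∀ x ∈ Ω, ∀ y ∈ Ω, Asymptotic x y →
      ψ (shiftBy k x) (shiftBy k y) = ψ x y)
  ∧ (∀ A : Finset (Fin d → ℤ),
      ContinuousOn (fun p : Config d α × Config d α => ψ p.1 p.2)
        {p | p.1 ∈ Ω ∧ p.2 ∈ Ω ∧ ∀ i ∉ A, p.1 i = p.2 i})

set_option linter.unusedSectionVars false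
set_option linter.unusedVariables false
set_option linter.deprecated false
set_option maxHeartbeats 1000000
open Filter

section Aux
variable {d : ℕ} {α : Type*}

lemma asymp_refl (x : Config d α) : Asymptotic x x := by
  simp [Asymptotic]

lemma asymp_symm {x y : Config d α} (h : Asymptotic x y) : Asymptotic y x := by
  apply h.subset
  intro i hi
  simp only [Set.mem_setOf_eq] at *
  exact fun he => hi he.symm

lemma asymp_trans {x y z : Config d α} (h1 : Asymptotic x y) (h2 : Asymptotic y z) :
    Asymptotic x z := by
  apply (h1.union h2).subset
  intro i hi
  simp only [Set.mem_setOf_eq, Set.mem_union] at *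
  by_contra hc
  push_neg at hc
  exact hi (hc.1.trans hc.2)

lemma asymp_shift {x y : Config d α} (k : Fin d → ℤ) (h : Asymptotic x y) :
    Asymptotic (shiftBy k x) (shiftBy k y) := by
  have : {i | shiftBy k x i ≠ shiftBy k y i} = (fun i => i + k) ⁻¹' {i | x i ≠ y i} := rfl
  rw [Asymptotic, this]
  exact h.preimage (fun a _ b _ hab => by
    funext j; have := congrFun hab j; simpa using this)

lemma asymp_single {x y : Config d α} (s : Fin d → ℤ) (h : ∀ t, t ≠ s → x t = y t) :
    Asymptotic x y := by
  apply (Set.finite_singleton s).subset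
  intro i hi
  simp only [Set.mem_setOf_eq] at hi
  by_contra hc
  exact hi (h i (by simpa using hc))

end Aux

section Z
variable {d : ℕ} {α : Type*} [Fintype α] [LinearOrder α] {Ω : Set (Config d α)}

lemma zeta_filter_nonempty {x : Config d α} (hx : x ∈ Ω) :
    (Finset.univ.filter fun a : α => Function.update x (0 : Fin d → ℤ) a ∈ Ω).Nonempty := by
  refine ⟨x 0, ?_⟩
  simp only [Finset.mem_filter, Finset.mem_univ, true_and]
  rwa [Function.update_eq_self]

lemma zeta_mem {x : Config d α} (hx : x ∈ Ω) : zeta Ω x ∈ Ω := by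
  have h := zeta_filter_nonempty (Ω := Ω) hx
  rw [zeta, dif_pos h]
  have := Finset.min'_mem _ h
  simp only [Finset.mem_filter] at this
  exact this.2

lemma zeta_apply_ne {x : Config d α} {i : Fin d → ℤ} (hi : i ≠ 0) : zeta Ω x i = x i := by
  rw [zeta, Function.update_of_ne hi]

lemma asymp_zeta (x : Config d α) : {i : Fin d → ℤ | x i ≠ zeta Ω x i}.Finite := by
  apply (Set.finite_singleton (0 : Fin d → ℤ)).subset
  intro i hi
  simp only [Set.mem_setOf_eq] at hi
  by_contra hc
  exact hi (zeta_apply_ne (by simpa using hc)).symm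

lemma zeta_congr {u v : Config d α} (hu : u ∈ Ω) (hv : v ∈ Ω)
    (h : ∀ t : Fin d → ℤ, t ≠ 0 → u t = v t) : zeta Ω u = zeta Ω v := by
  have hupd : ∀ a : α, Function.update u (0 : Fin d → ℤ) a
      = Function.update v (0 : Fin d → ℤ) a := by
    intro a
    funext t
    by_cases ht : t = 0
    · subst ht; simp
    · rw [Function.update_of_ne ht, Function.update_of_ne ht]
      exact h t ht
  have hset : (Finset.univ.filter fun a : α => Function.update u (0 : Fin d → ℤ) a ∈ Ω)
      = (Finset.univ.filter fun a : α => Function.update v (0 : Fin d → ℤ) a ∈ Ω) := by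
    apply Finset.filter_congr
    intro a _
    rw [hupd a]
  rw [zeta, zeta, dif_pos (zeta_filter_nonempty hu), dif_pos (zeta_filter_nonempty hv)]
  have hmin : (Finset.univ.filter
        fun a : α => Function.update u (0 : Fin d → ℤ) a ∈ Ω).min' (zeta_filter_nonempty hu)
      = (Finset.univ.filter
        fun a : α => Function.update v (0 : Fin d → ℤ) a ∈ Ω).min' (zeta_filter_nonempty hv) := by
    simp only [hset]
  rw [hmin, hupd]

end Z

section Path
variable {d : ℕ} {α : Type*} [Fintype α] [LinearOrder α] [TopologicalSpace α]
  {Ω : Set (Config d α)}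

/-- A pivot path (possibly with degenerate steps) from `x` to `y` inside `Ω`,
with designated pivot sites `s`. -/
def IsPathIn (Ω : Set (Config d α)) (x y : Config d α) (n : ℕ)
    (z : ℕ → Config d α) (s : ℕ → Fin d → ℤ) : Prop :=
  z 0 = x ∧ z n = y ∧ (∀ i ≤ n, z i ∈ Ω) ∧
    ∀ i < n, ∀ t, t ≠ s i → z i t = z (i + 1) t

lemma exists_path (hpivot : PivotProperty Ω) {x y : Config d α}
    (hx : x ∈ Ω) (hy : y ∈ Ω) (hxy : Asymptotic x y) :
    ∃ p : ℕ × (ℕ → Config d α) × (ℕ → Fin d → ℤ), IsPathIn Ω x y p.1 p.2.1 p.2.2 := by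
  obtain ⟨n, z, h0, hn, hmem, hstep⟩ := hpivot x hx y hy hxy
  refine ⟨⟨n, z, fun i => if h : i < n then (hstep i h).choose else 0⟩, h0, hn, hmem, ?_⟩
  intro i hi t ht
  dsimp only at hi ht ⊢
  rw [dif_pos hi] at ht
  exact (hstep i hi).choose_spec.2 t ht

lemma path_asymp {x y : Config d α} {n : ℕ} {z : ℕ → Config d α} {s : ℕ → Fin d → ℤ}
    (hp : IsPathIn Ω x y n z s) : ∀ m ≤ n, Asymptotic x (z m) := by
  intro m hm
  induction m with
  | zero => rw [hp.1]; exact asymp_refl x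
  | succ k ih =>
    exact asymp_trans (ih (le_of_lt (Nat.lt_of_succ_le hm)))
      (asymp_single (s k) (hp.2.2.2 k (Nat.lt_of_succ_le hm)))

/-- The telescoping sum of `G`-values along a path. -/
noncomputable def pathSum (G : Config d α → ℝ) (n : ℕ) (z : ℕ → Config d α)
    (s : ℕ → Fin d → ℤ) : ℝ :=
  ∑ i ∈ Finset.range n, (G (shiftBy (s i) (z i)) - G (shiftBy (s i) (z (i + 1))))

lemma pathSum_zero (G : Config d α → ℝ) (z : ℕ → Config d α) (s : ℕ → Fin d → ℤ) :
    pathSum G 0 z s = 0 := Finset.sum_range_zero _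

lemma pathSum_succ (G : Config d α → ℝ) (k : ℕ) (z : ℕ → Config d α) (s : ℕ → Fin d → ℤ) :
    pathSum G (k + 1) z s = pathSum G k z s
      + (G (shiftBy (s k) (z k)) - G (shiftBy (s k) (z (k + 1)))) :=
  Finset.sum_range_succ _ _

lemma cocycle_self {ψ : Config d α → Config d α → ℝ} (hψ : IsSullCocycle Ω ψ)
    {x : Config d α} (hx : x ∈ Ω) : ψ x x = 0 := by
  have := hψ.1 x hx x hx x hx (asymp_refl x) (asymp_refl x)
  linarith

lemma cocycle_step {ψ : Config d α → Config d α → ℝ} (hψ : IsSullCocycle Ω ψ)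
    (hshift : ∀ k : Fin d → ℤ, ∀ x ∈ Ω, shiftBy k x ∈ Ω)
    {u v : Config d α} (hu : u ∈ Ω) (hv : v ∈ Ω) {s : Fin d → ℤ}
    (hstep : ∀ t, t ≠ s → u t = v t) :
    ψ u v = ψ (shiftBy s u) (zeta Ω (shiftBy s u))
      - ψ (shiftBy s v) (zeta Ω (shiftBy s v)) := by
  set u' := shiftBy s u with hu'
  set v' := shiftBy s v with hv'
  have hu'm : u' ∈ Ω := hshift s u hu
  have hv'm : v' ∈ Ω := hshift s v hv
  have huv : Asymptotic u v := asymp_single s hstep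
  have hstep' : ∀ t : Fin d → ℤ, t ≠ 0 → u' t = v' t := by
    intro t ht
    apply hstep
    intro hc
    apply ht
    have : t + s = s := hc
    simpa using congrArg (fun w => w - s) this
  have hzeq : zeta Ω u' = zeta Ω v' := zeta_congr hu'm hv'm hstep'
  have hwm : zeta Ω u' ∈ Ω := zeta_mem hu'm
  have h1 : ψ u v = ψ u' v' := (hψ.2.1 s u hu v hv huv).symm
  have hau : Asymptotic u' (zeta Ω u') := asymp_zeta u'
  have hav : Asymptotic v' (zeta Ω v') := asymp_zeta v'
  have hav' : Asymptotic (zeta Ω u') v' := by rw [hzeq]; exact asymp_symm hav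
  have h2 : ψ u' (zeta Ω u') + ψ (zeta Ω u') v' = ψ u' v' :=
    hψ.1 u' hu'm _ hwm v' hv'm hau hav'
  have h3 : ψ v' (zeta Ω v') + ψ (zeta Ω v') v' = ψ v' v' :=
    hψ.1 v' hv'm _ (zeta_mem hv'm) v' hv'm hav (asymp_symm hav)
  have h4 : ψ v' v' = 0 := cocycle_self hψ hv'm
  rw [h1, hzeq]
  rw [hzeq] at h2
  linarith

lemma cocycle_pathSum {ψ : Config d α → Config d α → ℝ} (hψ : IsSullCocycle Ω ψ)
    (hshift : ∀ k : Fin d → ℤ, ∀ x ∈ Ω, shiftBy k x ∈ Ω)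
    {x y : Config d α} {n : ℕ} {z : ℕ → Config d α} {s : ℕ → Fin d → ℤ}
    (hp : IsPathIn Ω x y n z s) :
    pathSum (fun c => ψ c (zeta Ω c)) n z s = ψ x y := by
  obtain ⟨h0, hn, hmem, hstep⟩ := hp
  have key : ∀ m ≤ n, pathSum (fun c => ψ c (zeta Ω c)) m z s = ψ x (z m) := by
    intro m hm
    induction m with
    | zero =>
      rw [pathSum_zero, h0]
      exact (cocycle_self hψ (h0 ▸ hmem 0 (Nat.zero_le n))).symm
    | succ k ih =>
      have hk : k < n := Nat.lt_of_succ_le hm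
      rw [pathSum_succ, ih hk.le]
      have hzk := hmem k hk.le
      have hzk1 := hmem (k+1) hm
      have hterm := cocycle_step hψ hshift hzk hzk1 (hstep k hk)
      rw [← hterm]
      exact hψ.1 x (h0 ▸ hmem 0 (Nat.zero_le n)) (z k) hzk (z (k+1)) hzk1
        (path_asymp ⟨h0, hn, hmem, hstep⟩ k hk.le)
        (asymp_single (s k) (hstep k hk))
  rw [← hn]
  exact key n le_rfl
end Path

section Cont
variable {d : ℕ} {α : Type*} [Fintype α] [LinearOrder α] [TopologicalSpace α]
  [DiscreteTopology α] {Ω : Set (Config d α)}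

lemma cylinder_mem_nhds (x : Config d α) (B : Finset (Fin d → ℤ)) :
    {u : Config d α | ∀ j ∈ B, u j = x j} ∈ nhds x := by
  have heq : {u : Config d α | ∀ j ∈ B, u j = x j}
      = Set.pi ↑B (fun j => {x j}) := by
    ext u; simp [Set.mem_pi]
  rw [heq]
  exact (isOpen_set_pi B.finite_toSet (fun _ _ => isOpen_discrete _)).mem_nhds
    (by simp [Set.mem_pi])

lemma update_mem_congr {B : Finset (Fin d → ℤ)} (h0 : (0 : Fin d → ℤ) ∈ B)
    (hglue : ∀ x ∈ Ω, ∀ y ∈ Ω, (∀ i ∈ B, i ∉ ({0} : Finset (Fin d → ℤ)) → x i = y i) →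
      (fun i => if i ∈ B then x i else y i) ∈ Ω)
    {u v : Config d α} (hv : v ∈ Ω) (hagree : ∀ j ∈ B, u j = v j) {a : α}
    (ha : Function.update u (0 : Fin d → ℤ) a ∈ Ω) :
    Function.update v (0 : Fin d → ℤ) a ∈ Ω := by
  have hg := hglue (Function.update u 0 a) ha v hv (by
    intro i hiB hi0
    rw [Finset.mem_singleton] at hi0
    push_neg at hi0
    rw [Function.update_of_ne hi0]
    exact hagree i hiB)
  have heq : (fun i => if i ∈ B then Function.update u (0 : Fin d → ℤ) a i else v i)
      = Function.update v (0 : Fin d → ℤ) a := by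
    funext i
    by_cases hi0 : i = 0
    · subst hi0; simp [h0]
    · by_cases hiB : i ∈ B
      · simp only [if_pos hiB, Function.update_of_ne hi0]
        exact hagree i hiB
      · simp only [if_neg hiB, Function.update_of_ne hi0]
  rwa [heq] at hg

lemma zeta_apply_zero_congr {B : Finset (Fin d → ℤ)} (h0 : (0 : Fin d → ℤ) ∈ B)
    (hglue : ∀ x ∈ Ω, ∀ y ∈ Ω, (∀ i ∈ B, i ∉ ({0} : Finset (Fin d → ℤ)) → x i = y i) →
      (fun i => if i ∈ B then x i else y i) ∈ Ω)
    {u v : Config d α} (hu : u ∈ Ω) (hv : v ∈ Ω) (hagree : ∀ j ∈ B, u j = v j) :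
    zeta Ω u 0 = zeta Ω v 0 := by
  have hset : (Finset.univ.filter fun a : α => Function.update u (0 : Fin d → ℤ) a ∈ Ω)
      = (Finset.univ.filter fun a : α => Function.update v (0 : Fin d → ℤ) a ∈ Ω) := by
    ext a
    simp only [Finset.mem_filter, Finset.mem_univ, true_and]
    constructor
    · exact update_mem_congr h0 hglue hv hagree
    · exact update_mem_congr h0 hglue hu (fun j hj => (hagree j hj).symm)
  rw [zeta, zeta, Function.update_self, Function.update_self,
    dif_pos (zeta_filter_nonempty hu), dif_pos (zeta_filter_nonempty hv)]
  simp only [hset]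

lemma zeta_continuousOn (htmp : TMP Ω) : ContinuousOn (zeta Ω) Ω := by
  rw [continuousOn_pi]
  intro j
  by_cases hj : j = (0 : Fin d → ℤ)
  · subst hj
    obtain ⟨B, hAB, hglue⟩ := htmp {0}
    have h0 : (0 : Fin d → ℤ) ∈ B := hAB (Finset.mem_singleton_self 0)
    intro x hx
    have hev : ∀ᶠ u in nhdsWithin x Ω, zeta Ω u 0 = zeta Ω x 0 := by
      filter_upwards [mem_nhdsWithin_of_mem_nhds (cylinder_mem_nhds x B),
        self_mem_nhdsWithin] with u hu huΩ
      exact zeta_apply_zero_congr h0 hglue huΩ hx hu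
    exact Filter.Tendsto.congr' (Filter.EventuallyEq.symm hev) tendsto_const_nhds
  · have : (fun u : Config d α => zeta Ω u j) = fun u => u j := by
      funext u; exact zeta_apply_ne hj
    rw [this]
    exact (continuous_apply j).continuousOn

/-- Part 1: `x ↦ ψ (x, ζ₀ x)` is continuous on `Ω`. -/
lemma G_continuousOn (htmp : TMP Ω) {ψ : Config d α → Config d α → ℝ}
    (hψ : IsSullCocycle Ω ψ) : ContinuousOn (fun x => ψ x (zeta Ω x)) Ω := by
  have hmap : Set.MapsTo (fun x => (x, zeta Ω x)) Ω
      {p : Config d α × Config d α | p.1 ∈ Ω ∧ p.2 ∈ Ω ∧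
        ∀ i ∉ ({0} : Finset (Fin d → ℤ)), p.1 i = p.2 i} := by
    intro x hx
    refine ⟨hx, zeta_mem hx, ?_⟩
    intro i hi
    rw [Finset.mem_singleton] at hi
    exact (zeta_apply_ne hi).symm
  exact (hψ.2.2 {0}).comp (continuousOn_id.prodMk (zeta_continuousOn htmp)) hmap
end Cont

section Limit
variable {d : ℕ} {α : Type*} [Fintype α] [LinearOrder α] [TopologicalSpace α]
  [DiscreteTopology α] {Ω : Set (Config d α)}

lemma asymp_of_agree_off {x y : Config d α} {A : Finset (Fin d → ℤ)}
    (h : ∀ i ∉ A, x i = y i) : Asymptotic x y := by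
  apply A.finite_toSet.subset
  intro i hi
  simp only [Set.mem_setOf_eq] at hi
  by_contra hc
  exact hi (h i (by simpa using hc))

lemma limit_cocycle
    (hshift : ∀ k : Fin d → ℤ, ∀ x ∈ Ω, shiftBy k x ∈ Ω)
    (htmp : TMP Ω) (hpivot : PivotProperty Ω)
    (ψt : ℕ → Config d α → Config d α → ℝ) (hψt : ∀ t, IsSullCocycle Ω (ψt t))
    (F : Config d α → ℝ) (hFcont : ContinuousOn F Ω)
    (hconv : ∀ x ∈ Ω, Tendsto (fun t => ψt t x (zeta Ω x)) atTop (nhds (F x))) :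
    ∃ ψ : Config d α → Config d α → ℝ, IsSullCocycle Ω ψ ∧
      ∀ x ∈ Ω, ∀ y ∈ Ω, Asymptotic x y →
        Tendsto (fun t => ψt t x y) atTop (nhds (ψ x y)) := by
  classical
  -- along any path, the cocycle values converge to the path sum of `F`
  have tendsto_path : ∀ x ∈ Ω, ∀ y ∈ Ω, ∀ n z s, IsPathIn Ω x y n z s →
      Tendsto (fun t => ψt t x y) atTop (nhds (pathSum F n z s)) := by
    intro x hx y hy n z s hp
    have hsum : Tendsto (fun t => pathSum (fun c => ψt t c (zeta Ω c)) n z s) atTop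
        (nhds (pathSum F n z s)) := by
      unfold pathSum
      apply tendsto_finset_sum
      intro i hi
      rw [Finset.mem_range] at hi
      have h1 : shiftBy (s i) (z i) ∈ Ω := hshift _ _ (hp.2.2.1 i hi.le)
      have h2 : shiftBy (s i) (z (i + 1)) ∈ Ω := hshift _ _ (hp.2.2.1 (i + 1) hi)
      exact (hconv _ h1).sub (hconv _ h2)
    exact hsum.congr (fun t => cocycle_pathSum (hψt t) hshift hp)
  set ψ : Config d α → Config d α → ℝ := fun x y =>
    if h : x ∈ Ω ∧ y ∈ Ω ∧ Asymptotic x y then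
      pathSum F (exists_path hpivot h.1 h.2.1 h.2.2).choose.1
        (exists_path hpivot h.1 h.2.1 h.2.2).choose.2.1
        (exists_path hpivot h.1 h.2.1 h.2.2).choose.2.2
    else 0 with hψdef
  have hlim : ∀ x ∈ Ω, ∀ y ∈ Ω, Asymptotic x y →
      Tendsto (fun t => ψt t x y) atTop (nhds (ψ x y)) := by
    intro x hx y hy hxy
    have h : x ∈ Ω ∧ y ∈ Ω ∧ Asymptotic x y := ⟨hx, hy, hxy⟩
    rw [hψdef]
    simp only [dif_pos h]
    exact tendsto_path x hx y hy _ _ _ (exists_path hpivot h.1 h.2.1 h.2.2).choose_spec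
  have hpath_eq : ∀ x ∈ Ω, ∀ y ∈ Ω, Asymptotic x y → ∀ n z s, IsPathIn Ω x y n z s →
      ψ x y = pathSum F n z s := fun x hx y hy hxy n z s hp =>
    tendsto_nhds_unique (hlim x hx y hy hxy) (tendsto_path x hx y hy n z s hp)
  refine ⟨ψ, ⟨?_, ?_, ?_⟩, hlim⟩
  · -- cocycle identity
    intro x hx y hy z hz hxy hyz
    have h1 := (hlim x hx y hy hxy).add (hlim y hy z hz hyz)
    have h2 := hlim x hx z hz (asymp_trans hxy hyz)
    exact tendsto_nhds_unique (h1.congr (fun t => (hψt t).1 x hx y hy z hz hxy hyz)) h2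
  · -- shift invariance
    intro k x hx y hy hxy
    have h1 := hlim _ (hshift k x hx) _ (hshift k y hy) (asymp_shift k hxy)
    have h2 := hlim x hx y hy hxy
    exact tendsto_nhds_unique h1
      ((h2.congr (fun t => ((hψt t).2.1 k x hx y hy hxy).symm)))
  · -- continuity
    intro A
    rintro ⟨x, y⟩ ⟨hx, hy, hAxy⟩
    dsimp only at hx hy hAxy
    have hxy : Asymptotic x y := asymp_of_agree_off hAxy
    obtain ⟨⟨n, z, s⟩, hpz⟩ := exists_path hpivot hx hy hxy
    dsimp only at hpz
    have hdiff : ∀ i ≤ n, ({j | z i j ≠ x j} : Set (Fin d → ℤ)).Finite :=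
      fun i hi => asymp_symm (path_asymp hpz i hi)
    have hS : ((↑A : Set (Fin d → ℤ))
        ∪ (⋃ i ∈ Finset.range (n + 1), {j | z i j ≠ x j})
        ∪ (s '' {i | i < n})).Finite := by
      refine (A.finite_toSet.union ?_).union ?_
      · exact Set.Finite.biUnion (Finset.range (n + 1)).finite_toSet
          (fun i hi => hdiff i (by simpa [Nat.lt_succ_iff] using hi))
      · exact (Set.finite_Iio n).image s
    obtain ⟨B, hSB, hglue⟩ := htmp hS.toFinset
    have hA_B : ∀ j ∈ A, j ∈ B := by
      intro j hj
      apply hSB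
      rw [Set.Finite.mem_toFinset]
      exact Or.inl (Or.inl hj)
    have hs_B : ∀ i < n, s i ∈ B := by
      intro i hi
      apply hSB
      rw [Set.Finite.mem_toFinset]
      exact Or.inr ⟨i, hi, rfl⟩
    have hz_x : ∀ i ≤ n, ∀ j, j ∉ B → z i j = x j := by
      intro i hi j hj
      by_contra hc
      apply hj
      apply hSB
      rw [Set.Finite.mem_toFinset]
      refine Or.inl (Or.inr ?_)
      simp only [Set.mem_iUnion, Finset.mem_range]
      exact ⟨i, by omega, hc⟩
    set glue : ℕ → Config d α → Config d α :=
      fun i u j => if j ∈ B then z i j else u j with hgluedef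
    have hC1 : ∀ u ∈ Ω, (∀ j ∈ B, u j = x j) → ∀ i ≤ n, glue i u ∈ Ω := by
      intro u hu hagree i hi
      have := hglue (z i) (hpz.2.2.1 i hi) u hu (by
        intro j hjB hjS
        rw [Set.Finite.mem_toFinset] at hjS
        have hzx : z i j = x j := by
          by_contra hc
          exact hjS (Or.inl (Or.inr (by
            simp only [Set.mem_iUnion, Finset.mem_range]
            exact ⟨i, by omega, hc⟩)))
        rw [hzx, hagree j hjB])
      exact this
    have hC2 : ∀ u v : Config d α, u ∈ Ω → v ∈ Ω → (∀ j ∈ B, u j = x j) →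
        (∀ j ∈ B, v j = y j) → (∀ j ∉ A, u j = v j) →
        IsPathIn Ω u v n (fun i => glue i u) s := by
      intro u v hu hv hax hay hauv
      refine ⟨?_, ?_, fun i hi => hC1 u hu hax i hi, ?_⟩
      · funext j
        simp only [hgluedef]
        by_cases hjB : j ∈ B
        · rw [if_pos hjB, hpz.1, (hax j hjB)]
        · rw [if_neg hjB]
      · funext j
        simp only [hgluedef]
        by_cases hjB : j ∈ B
        · rw [if_pos hjB, hpz.2.1, (hay j hjB)]
        · rw [if_neg hjB]
          exact hauv j (fun hjA => hjB (hA_B j hjA))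
      · intro i hi t ht
        simp only [hgluedef]
        by_cases htB : t ∈ B
        · rw [if_pos htB, if_pos htB]
          exact hpz.2.2.2 i hi t ht
        · rw [if_neg htB, if_neg htB]
    -- the neighbourhood on which `ψ` is given by the glued path sum
    set V : Set (Config d α × Config d α) :=
      {u | ∀ j ∈ B, u j = x j} ×ˢ {v | ∀ j ∈ B, v j = y j} with hVdef
    have hV : V ∈ nhds (x, y) :=
      prod_mem_nhds (cylinder_mem_nhds x B) (cylinder_mem_nhds y B)
    set S : Set (Config d α × Config d α) :=
      {p | p.1 ∈ Ω ∧ p.2 ∈ Ω ∧ ∀ i ∉ A, p.1 i = p.2 i} with hSdef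
    show ContinuousWithinAt (fun p : Config d α × Config d α => ψ p.1 p.2) S (x, y)
    rw [← continuousWithinAt_inter hV]
    set Ψ : Config d α × Config d α → ℝ :=
      fun p => pathSum F n (fun i => glue i p.1) s with hΨdef
    have hmemV : ∀ p ∈ S ∩ V, p.1 ∈ Ω ∧ (∀ j ∈ B, p.1 j = x j) := by
      rintro ⟨u, v⟩ ⟨⟨hu, -, -⟩, huV, -⟩
      exact ⟨hu, huV⟩
    have heqΨ : ∀ p ∈ S ∩ V, ψ p.1 p.2 = Ψ p := by
      rintro ⟨u, v⟩ ⟨⟨hu, hv, hA⟩, huV, hvV⟩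
      exact hpath_eq u hu v hv (asymp_of_agree_off hA) n _ s
        (hC2 u v hu hv huV hvV hA)
    have hΨcont : ContinuousOn Ψ (S ∩ V) := by
      have hterm : ∀ i ≤ n, ∀ k : Fin d → ℤ,
          ContinuousOn (fun p : Config d α × Config d α =>
            F (shiftBy k (glue i p.1))) (S ∩ V) := by
        intro i hi k
        have hinner : Continuous (fun p : Config d α × Config d α =>
            shiftBy k (glue i p.1)) := by
          apply continuous_pi
          intro j
          simp only [shiftBy, hgluedef]
          by_cases hjB : (j + k) ∈ B
          · simp only [if_pos hjB]
            exact continuous_const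
          · simp only [if_neg hjB]
            exact (continuous_apply (j + k)).comp continuous_fst
        refine hFcont.comp hinner.continuousOn ?_
        intro p hp
        exact hshift k _ (hC1 p.1 (hmemV p hp).1 (hmemV p hp).2 i hi)
      simp only [hΨdef, pathSum]
      apply continuousOn_finset_sum
      intro i hi
      rw [Finset.mem_range] at hi
      exact (hterm i hi.le (s i)).sub (hterm (i + 1) hi (s i))
    have hxyV : (x, y) ∈ S ∩ V := by
      refine ⟨⟨hx, hy, hAxy⟩, ?_, ?_⟩ <;> intro j hj <;> rfl
    exact (hΨcont.continuousWithinAt hxyV).congr heqΨ (heqΨ (x, y) hxyV)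
end Limit

/-- for a shift space `Ω` with the TMP and the pivot property, the map
`F(ψ)(x) = ψ(x, ζ₀x)` on shift-invariant continuous cocycles is (well-defined into `C(Ω)`,)
injective and linear, with closed image in `C(Ω)`; consequently the Sullivan norm
`‖ψ‖_Sull = sup_{x∈Ω} |ψ(x, ζ₀x)|` is complete. -/
theorem stmt_19 {d : ℕ} {α : Type*} [Fintype α] [LinearOrder α] [Nonempty α]
    [TopologicalSpace α] [DiscreteTopology α]
    (Ω : Set (Config d α)) (hne : Ω.Nonempty) (hclosed : IsClosed Ω)
    (hshift : ∀ k : Fin d → ℤ, ∀ x ∈ Ω, shiftBy k x ∈ Ω)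
    (htmp : TMP Ω) (hpivot : PivotProperty Ω) :
    -- `F` maps into `C(Ω)`:
    (∀ ψ : Config d α → Config d α → ℝ, IsSullCocycle Ω ψ →
        ContinuousOn (fun x => ψ x (zeta Ω x)) Ω)
    -- `F` is injective (equivalently, by linearity, has trivial kernel):
    ∧ (∀ ψ₁ ψ₂ : Config d α → Config d α → ℝ, IsSullCocycle Ω ψ₁ → IsSullCocycle Ω ψ₂ →
        (∀ x ∈ Ω, ψ₁ x (zeta Ω x) = ψ₂ x (zeta Ω x)) →
        ∀ x ∈ Ω, ∀ y ∈ Ω, Asymptotic x y → ψ₁ x y = ψ₂ x y)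
    -- the image of `F` is a closed subspace of `C(Ω)` with the uniform norm:
    ∧ IsClosed {f : C(↥Ω, ℝ) | ∃ ψ : Config d α → Config d α → ℝ,
        IsSullCocycle Ω ψ ∧ ∀ x : ↥Ω, f x = ψ (x : Config d α) (zeta Ω (x : Config d α))}
    -- consequently the Sullivan norm is complete: every Cauchy sequence of shift-invariant
    -- continuous cocycles converges in the Sullivan norm to such a cocycle:
    ∧ (∀ ψseq : ℕ → Config d α → Config d α → ℝ,
        (∀ t, IsSullCocycle Ω (ψseq t)) →
        (∀ ε > (0 : ℝ), ∃ N : ℕ, ∀ s ≥ N, ∀ t ≥ N, ∀ x ∈ Ω,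
          |ψseq s x (zeta Ω x) - ψseq t x (zeta Ω x)| ≤ ε) →
        ∃ ψ : Config d α → Config d α → ℝ, IsSullCocycle Ω ψ ∧
          ∀ ε > (0 : ℝ), ∃ N : ℕ, ∀ t ≥ N, ∀ x ∈ Ω,
            |ψseq t x (zeta Ω x) - ψ x (zeta Ω x)| ≤ ε) := by
  classical
  have hΩcomp : IsCompact Ω := hclosed.isCompact
  haveI : CompactSpace ↥Ω := isCompact_iff_compactSpace.mp hΩcomp
  refine ⟨fun ψ hψ => G_continuousOn htmp hψ, ?_, ?_, ?_⟩
  · -- injectivity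
    intro ψ₁ ψ₂ h₁ h₂ heq x hx y hy hxy
    have hψ : IsSullCocycle Ω (fun a b => ψ₁ a b - ψ₂ a b) := by
      refine ⟨?_, ?_, ?_⟩
      · intro a ha b hb c hc hab hbc
        have e1 := h₁.1 a ha b hb c hc hab hbc
        have e2 := h₂.1 a ha b hb c hc hab hbc
        dsimp only
        linarith
      · intro k a ha b hb hab
        dsimp only
        rw [h₁.2.1 k a ha b hb hab, h₂.2.1 k a ha b hb hab]
      · intro A
        exact (h₁.2.2 A).sub (h₂.2.2 A)
    obtain ⟨⟨n, z, s⟩, hp⟩ := exists_path hpivot hx hy hxy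
    dsimp only at hp
    have hval := cocycle_pathSum hψ hshift hp
    have hzero : pathSum (fun c => (fun a b => ψ₁ a b - ψ₂ a b) c (zeta Ω c)) n z s = 0 := by
      unfold pathSum
      apply Finset.sum_eq_zero
      intro i hi
      rw [Finset.mem_range] at hi
      have h1 : shiftBy (s i) (z i) ∈ Ω := hshift _ _ (hp.2.2.1 i hi.le)
      have h2 : shiftBy (s i) (z (i + 1)) ∈ Ω := hshift _ _ (hp.2.2.1 (i + 1) hi)
      dsimp only
      rw [heq _ h1, heq _ h2]
      ring
    have : ψ₁ x y - ψ₂ x y = 0 := by rw [← hval, hzero]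
    linarith
  · -- closed image
    apply IsSeqClosed.isClosed
    intro g f hg hgf
    choose ψt hcoc hval using hg
    set F : Config d α → ℝ := fun c => if h : c ∈ Ω then f ⟨c, h⟩ else 0 with hF
    have hFcont : ContinuousOn F Ω := by
      rw [continuousOn_iff_continuous_restrict]
      have : Ω.domRestrict F = f := by
        funext p
        simp only [Set.domRestrict_apply, hF, dif_pos p.2]
      rw [this]
      exact f.continuous
    have hptconv : ∀ x ∈ Ω, Tendsto (fun t => ψt t x (zeta Ω x)) atTop (nhds (F x)) := by
      intro x hx
      have h1 : Tendsto (fun t => g t ⟨x, hx⟩) atTop (nhds (f ⟨x, hx⟩)) :=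
        ((continuous_eval_const (⟨x, hx⟩ : ↥Ω)).tendsto f).comp hgf
      have h2 : (fun t => g t ⟨x, hx⟩) = fun t => ψt t x (zeta Ω x) :=
        funext fun t => hval t ⟨x, hx⟩
      have h3 : F x = f ⟨x, hx⟩ := dif_pos hx
      rw [h2] at h1
      rw [h3]
      exact h1
    obtain ⟨ψ, hψ, hlim⟩ := limit_cocycle hshift htmp hpivot ψt hcoc F hFcont hptconv
    refine ⟨ψ, hψ, ?_⟩
    intro x
    have h1 := hlim (x : Config d α) x.2 (zeta Ω (x : Config d α))
      (zeta_mem x.2) (asymp_zeta (x : Config d α))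
    have h2 := hptconv (x : Config d α) x.2
    have h3 := tendsto_nhds_unique h2 h1
    have h4 : F (x : Config d α) = f x := by
      rw [hF]
      simp only [dif_pos x.2]
    rw [← h3, h4]
  · -- completeness of the Sullivan norm
    intro ψseq hcocs hcauchy
    set g : ℕ → C(↥Ω, ℝ) := fun t =>
      ⟨Ω.restrict (fun c => ψseq t c (zeta Ω c)),
        continuousOn_iff_continuous_restrict.mp (G_continuousOn htmp (hcocs t))⟩ with hgdef
    have hcs : CauchySeq g := by
      rw [Metric.cauchySeq_iff]
      intro ε hε
      obtain ⟨N, hN⟩ := hcauchy (ε / 2) (by positivity)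
      refine ⟨N, fun a ha b hb => lt_of_le_of_lt ?_ (by linarith : ε / 2 < ε)⟩
      rw [ContinuousMap.dist_le (by positivity)]
      intro p
      rw [Real.dist_eq]
      exact hN a ha b hb p p.2
    obtain ⟨f, hf⟩ := cauchySeq_tendsto_of_complete hcs
    set F : Config d α → ℝ := fun c => if h : c ∈ Ω then f ⟨c, h⟩ else 0 with hF
    have hFcont : ContinuousOn F Ω := by
      rw [continuousOn_iff_continuous_restrict]
      have : Ω.domRestrict F = f := by
        funext p
        simp only [Set.domRestrict_apply, hF, dif_pos p.2]
      rw [this]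
      exact f.continuous
    have hptconv : ∀ x ∈ Ω, Tendsto (fun t => ψseq t x (zeta Ω x)) atTop (nhds (F x)) := by
      intro x hx
      have h1 : Tendsto (fun t => g t ⟨x, hx⟩) atTop (nhds (f ⟨x, hx⟩)) :=
        ((continuous_eval_const (⟨x, hx⟩ : ↥Ω)).tendsto f).comp hf
      have h3 : F x = f ⟨x, hx⟩ := dif_pos hx
      rw [h3]
      exact h1
    obtain ⟨ψ, hψ, hlim⟩ := limit_cocycle hshift htmp hpivot ψseq hcocs F hFcont hptconv
    refine ⟨ψ, hψ, ?_⟩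
    intro ε hε
    have hψζ : ∀ x (hx : x ∈ Ω), ψ x (zeta Ω x) = f ⟨x, hx⟩ := by
      intro x hx
      have h1 := hlim x hx (zeta Ω x) (zeta_mem hx) (asymp_zeta x)
      have h2 := hptconv x hx
      have h3 := tendsto_nhds_unique h1 h2
      rw [h3]
      exact dif_pos hx
    obtain ⟨N, hN⟩ := (Metric.tendsto_atTop.mp hf) ε hε
    refine ⟨N, fun t ht x hx => ?_⟩
    have e1 : |ψseq t x (zeta Ω x) - ψ x (zeta Ω x)|
        = dist (g t ⟨x, hx⟩) (f ⟨x, hx⟩) := by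
      rw [hψζ x hx, Real.dist_eq]
      rfl
    rw [e1]
    exact le_trans (ContinuousMap.dist_apply_le_dist _) (hN t ht).le
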